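/- Let [T1,T1'] and [T2,T2'] be two Tamari intervals of size n with interval-posets I1 = IP[T1,T1'] and I2 = IP[T2,T2']. There exists a binary tree S with T1 ≤ S ≤ T1' and T2 ≤ S ≤ T2' if and only if the transitive closure R of the union of the relations of I1 and I2 is antisymmetric (hence a poset); and in that case R is an interval-poset, equal to IP[U,U'] for binary trees U ≤ U' such that {S : U ≤ S ≤ U'} = {S : T1 ≤ S ≤ T1' and T2 ≤ S ≤ T2'}. -/

import Mathlib

open Polynomial

/-- A binary tree: either the empty tree or a pair of binary trees
(left and right subtrees) grafted on an internal node. -/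
inductive BinTree : Type
  | leaf : BinTree
  | node : BinTree → BinTree → BinTree

namespace BinTree

/-- The size of a binary tree: its number of internal nodes. -/
def size : BinTree → ℕ
  | leaf => 0
  | node l r => l.size + r.size + 1

/-- One right rotation somewhere in the tree: `Rot T T'` means that `T'` is obtained
from `T` by replacing one subtree of the form `y(x(A,B),C)` by `x(A,y(B,C))`. -/
inductive Rot : BinTree → BinTree → Prop
  | root (A B C : BinTree) : Rot (node (node A B) C) (node A (node B C))
  | left {L L' : BinTree} (R : BinTree) : Rot L L' → Rot (node L R) (node L' R)
  | right (L : BinTree) {R R' : BinTree} : Rot R R' → Rot (node L R) (node L R')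

/-- The Tamari order: `TamariLE T T'` iff `T'` is obtained from `T` by a (possibly empty)
sequence of right rotations. -/
def TamariLE (T T' : BinTree) : Prop := Relation.ReflTransGen Rot T T'

/-- The Tamari polynomial `B_T ∈ ℤ[x]`: `B_∅ = 1` and for `T = x(L,R)`, `B_T` is the
unique polynomial with `(x-1)·B_T = x·B_L·(x·B_R - B_R(1))` (exact division by the
monic polynomial `X - 1`, the right-hand side vanishing at `x = 1`). -/
noncomputable def tamPoly : BinTree → Polynomial ℤ
  | leaf => 1
  | node l r =>
      (X * tamPoly l * (X * tamPoly r - C ((tamPoly r).eval 1))) /ₘ (X - C 1)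

/-- The mirror Tamari polynomial, obtained by exchanging the roles of the left and
right subtrees in the recursive definition of the Tamari polynomial. -/
noncomputable def tamPolyMirror : BinTree → Polynomial ℤ
  | leaf => 1
  | node l r =>
      (X * tamPolyMirror r * (X * tamPolyMirror l - C ((tamPolyMirror l).eval 1))) /ₘ (X - C 1)

/-- The number of nodes on the left border of a binary tree. -/
def leftBorder : BinTree → ℕ
  | leaf => 0
  | node l _ => l.leftBorder + 1

/-- The number of nodes on the right border of a binary tree. -/
def rightBorder : BinTree → ℕ
  | leaf => 0
  | node _ r => r.rightBorder + 1

/-- `inSub T a b`: in the unique binary-search-tree labelling of `T` by `1,…,size T`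
(all labels of the left subtree of a node are smaller than its label, all labels of its
right subtree are larger), the node labelled `a` belongs to the subtree rooted at the
node labelled `b` (in particular `inSub T a a` holds for every node label `a`). -/
def inSub : BinTree → ℕ → ℕ → Prop
  | leaf => fun _ _ => False
  | node l r => fun a b =>
      (b = l.size + 1 ∧ 1 ≤ a ∧ a ≤ l.size + r.size + 1) ∨
      inSub l a b ∨
      (l.size + 1 < a ∧ l.size + 1 < b ∧ inSub r (a - (l.size + 1)) (b - (l.size + 1)))

/-- The binary search tree poset of `T`: `bstRel T a b` iff `a ≺_T b`, i.e. `a ≠ b` and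
the node labelled `a` is in the subtree rooted at the node labelled `b`. -/
def bstRel (T : BinTree) (a b : ℕ) : Prop := a ≠ b ∧ inSub T a b

/-- The increasing forest `inc(T)`: `a ≺ b` iff `a < b` and `a ≺_T b`. -/
def incRel (T : BinTree) (a b : ℕ) : Prop := a < b ∧ bstRel T a b

/-- The decreasing forest `dec(T)`: `b ≺ a` iff `b > a` and `b ≺_T a`. -/
def decRel (T : BinTree) (a b : ℕ) : Prop := b < a ∧ bstRel T a b

/-- The relations of the interval-poset `IP[T,T']`: exactly those of `dec(T)`
together with those of `inc(T')`. -/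
def IPrel (T T' : BinTree) (a b : ℕ) : Prop := decRel T a b ∨ incRel T' a b

end BinTree

open BinTree

/-- `σ` is a linear extension of the strict relation `rel` on `{1,…,n}`: reading the word
`σ(1)…σ(n)` (the `i`-th letter being the label `(σ i : ℕ) + 1`), whenever `rel a b` holds
the letter `a` appears before the letter `b`. -/
def IsLinExt (n : ℕ) (rel : ℕ → ℕ → Prop) (σ : Equiv.Perm (Fin n)) : Prop :=
  ∀ i j : Fin n, rel ((σ i : ℕ) + 1) ((σ j : ℕ) + 1) → i < j

/-- An interval-poset of size `n`: a (strict) poset on `{1,…,n}` such that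
`a ≺ c` implies `b ≺ c` for all `a < b < c`, and `c ≺ a` implies `b ≺ a` for all
`a < b < c`. -/
def IsIntervalPoset (n : ℕ) (rel : ℕ → ℕ → Prop) : Prop :=
  (∀ a b, rel a b → 1 ≤ a ∧ a ≤ n ∧ 1 ≤ b ∧ b ≤ n) ∧
  (∀ a, ¬ rel a a) ∧
  (∀ a b c, rel a b → rel b c → rel a c) ∧
  (∀ a b c, a < b → b < c → rel a c → rel b c) ∧
  (∀ a b c, a < b → b < c → rel c a → rel b a)

/-- `trees(P)` : the number of connected components of the forest formed by the decreasing
relations of `P`, i.e. the number of `k ∈ {1,…,n}` such that there is no `j < k`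
with `k ≺_P j`. -/
noncomputable def treeStat (n : ℕ) (rel : ℕ → ℕ → Prop) : ℕ :=
  Set.ncard {k : ℕ | 1 ≤ k ∧ k ≤ n ∧ ∀ j, j < k → ¬ rel k j}

/-- The composition `𝔹(I1,I2)` of two interval-posets of sizes `k1` and `k2`:
the set of interval-posets `I` of size `k1+k2+1` such that
(i) the relations of `I` among `1,…,k1` are exactly those of `I1`,
(ii) the relations of `I` among `k1+2,…,k1+k2+1` are exactly those of `I2` shifted
by `k1+1`, (iii) `i ≺_I k1+1` for all `i ≤ k1`, and (iv) there is no relation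
`k1+1 ≺_I j` for `j > k1+1`. -/
def Comp (k1 k2 : ℕ) (I1 I2 : ℕ → ℕ → Prop) : Set (ℕ → ℕ → Prop) :=
  {I | IsIntervalPoset (k1 + k2 + 1) I ∧
    (∀ a b, 1 ≤ a → a ≤ k1 → 1 ≤ b → b ≤ k1 → (I a b ↔ I1 a b)) ∧
    (∀ a b, k1 + 2 ≤ a → a ≤ k1 + k2 + 1 → k1 + 2 ≤ b → b ≤ k1 + k2 + 1 →
      (I a b ↔ I2 (a - (k1 + 1)) (b - (k1 + 1)))) ∧
    (∀ i, 1 ≤ i → i ≤ k1 → I i (k1 + 1)) ∧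
    (∀ j, k1 + 1 < j → ¬ I (k1 + 1) j)}

/-- The co-inversions of a permutation `σ` of `{1,…,n}` (written as the word
`σ(1)…σ(n)`): pairs `(σ(i), σ(j))` with `i < j` and `σ(i) > σ(j)`. -/
def coinv (n : ℕ) (σ : Equiv.Perm (Fin n)) : Set (Fin n × Fin n) :=
  {p | ∃ i j : Fin n, i < j ∧ σ j < σ i ∧ p = (σ i, σ j)}

namespace BinTree

/-- Bracket vector: `rv T b` is the largest label of the subtree rooted at `b`. -/
def rv : BinTree → ℕ → ℕ
  | leaf, _ => 0
  | node l r, b =>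
    if b ≤ l.size then rv l b
    else if b = l.size + 1 then l.size + r.size + 1
    else rv r (b - (l.size + 1)) + (l.size + 1)

lemma size_rot {T T' : BinTree} (h : Rot T T') : T'.size = T.size := by
  induction h with
  | root A B C => simp [size]; omega
  | left R _ ih => simp [size, ih]
  | right L _ ih => simp [size, ih]

lemma size_tamari {T T' : BinTree} (h : TamariLE T T') : T'.size = T.size := by
  induction h with
  | refl => rfl
  | tail _ h ih => rw [size_rot h, ih]

lemma rv_le_size (T : BinTree) (b : ℕ) : rv T b ≤ T.size := by
  induction T generalizing b with
  | leaf => simp [rv, size]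
  | node l r ihl ihr =>
    simp only [rv, size]
    split
    · exact le_trans (ihl b) (by omega)
    · split
      · omega
      · have := ihr (b - (l.size + 1)); omega

lemma rv_zero (T : BinTree) : rv T 0 = 0 := by
  induction T with
  | leaf => rfl
  | node l r ihl ihr => simp [rv, ihl]

lemma le_rv_self (T : BinTree) (b : ℕ) (hb : b ≤ T.size) : b ≤ rv T b := by
  induction T generalizing b with
  | leaf => simp [size] at hb; omega
  | node l r ihl ihr =>
    simp only [rv, size] at *
    split
    · exact le_trans (le_refl b) (ihl b (by omega))
    · split
      · omega
      · have := ihr (b - (l.size + 1)) (by omega); omega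

lemma rv_nest (T : BinTree) (i j : ℕ) (hi : 1 ≤ i) (hij : i ≤ j) (hj : j ≤ rv T i) :
    rv T j ≤ rv T i := by
  induction T generalizing i j with
  | leaf => simp [rv]
  | node l r ihl ihr =>
    simp only [rv] at *
    by_cases h1 : i ≤ l.size
    · rw [if_pos h1] at hj ⊢
      have hjl : j ≤ l.size := le_trans hj (rv_le_size l i)
      rw [if_pos hjl]
      exact ihl i j hi hij hj
    · rw [if_neg h1] at hj ⊢
      by_cases h2 : i = l.size + 1
      · rw [if_pos h2] at hj ⊢
        by_cases h3 : j ≤ l.size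
        · rw [if_pos h3]; exact le_trans (rv_le_size l j) (by omega)
        · by_cases h4 : j = l.size + 1
          · rw [if_neg h3, if_pos h4]
          · rw [if_neg h3, if_neg h4]
            have := rv_le_size r (j - (l.size + 1)); omega
      · rw [if_neg h2] at hj ⊢
        have hjl : ¬ j ≤ l.size := by omega
        have hjm : j ≠ l.size + 1 := by omega
        rw [if_neg hjl, if_neg hjm]
        have := ihr (i - (l.size + 1)) (j - (l.size + 1)) (by omega) (by omega) (by omega)
        omega

end BinTree
namespace BinTree

lemma inSub_bounds {T : BinTree} {a b : ℕ} (h : inSub T a b) :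
    1 ≤ a ∧ a ≤ T.size ∧ 1 ≤ b ∧ b ≤ T.size := by
  induction T generalizing a b with
  | leaf => exact absurd h (by simp [inSub])
  | node l r ihl ihr =>
    simp only [inSub, size] at h ⊢
    rcases h with ⟨hb, ha⟩ | h | ⟨h1, h2, h⟩
    · omega
    · have := ihl h; omega
    · have := ihr h; omega

lemma inSub_self {T : BinTree} {b : ℕ} (h1 : 1 ≤ b) (h2 : b ≤ T.size) : inSub T b b := by
  induction T generalizing b with
  | leaf => simp [size] at h2; omega
  | node l r ihl ihr =>
    simp only [inSub, size] at *
    by_cases h : b = l.size + 1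
    · exact Or.inl ⟨h, by omega⟩
    · by_cases h' : b ≤ l.size
      · exact Or.inr (Or.inl (ihl h1 h'))
      · exact Or.inr (Or.inr ⟨by omega, by omega, ihr (by omega) (by omega)⟩)

lemma inSub_trans {T : BinTree} {a b c : ℕ} (h1 : inSub T a b) (h2 : inSub T b c) :
    inSub T a c := by
  induction T generalizing a b c with
  | leaf => exact absurd h1 (by simp [inSub])
  | node l r ihl ihr =>
    simp only [inSub, size] at *
    rcases h2 with ⟨hc, hb⟩ | h2 | ⟨hb, hc, h2⟩
    · rcases h1 with ⟨hb', ha⟩ | h1 | ⟨hb', hc', h1⟩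
      · exact Or.inl ⟨hc, ha⟩
      · have := inSub_bounds h1; exact Or.inl ⟨hc, by omega⟩
      · have := inSub_bounds h1; exact Or.inl ⟨hc, by omega⟩
    · have hb' := inSub_bounds h2
      rcases h1 with ⟨hbm, ha⟩ | h1 | ⟨hb2, hc', h1⟩
      · omega
      · exact Or.inr (Or.inl (ihl h1 h2))
      · omega
    · have hb' := inSub_bounds h2
      rcases h1 with ⟨hbm, ha⟩ | h1 | ⟨hb2, hc', h1⟩
      · omega
      · have := inSub_bounds h1; omega
      · exact Or.inr (Or.inr ⟨hb2, hc, ihr h1 h2⟩)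

lemma inSub_antisymm {T : BinTree} {a b : ℕ} (h1 : inSub T a b) (h2 : inSub T b a) :
    a = b := by
  induction T generalizing a b with
  | leaf => exact absurd h1 (by simp [inSub])
  | node l r ihl ihr =>
    simp only [inSub, size] at *
    rcases h1 with ⟨hb, ha⟩ | h1 | ⟨ha1, hb1, h1⟩
    · rcases h2 with ⟨ha', hb'⟩ | h2 | ⟨hb2, ha2, h2⟩
      · omega
      · have := inSub_bounds h2; omega
      · omega
    · have := inSub_bounds h1
      rcases h2 with ⟨ha', hb'⟩ | h2 | ⟨hb2, ha2, h2⟩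
      · omega
      · exact ihl h1 h2
      · omega
    · rcases h2 with ⟨ha', hb'⟩ | h2 | ⟨hb2, ha2, h2⟩
      · omega
      · have := inSub_bounds h2; omega
      · have := ihr h1 h2; omega

/-- Convexity, upward side: if `a` is in the subtree of `c` and `a ≤ b ≤ c` then
`b` is in the subtree of `c`. -/
lemma inSub_convex_left {T : BinTree} {a b c : ℕ} (h : inSub T a c)
    (hab : a ≤ b) (hbc : b ≤ c) : inSub T b c := by
  induction T generalizing a b c with
  | leaf => exact absurd h (by simp [inSub])
  | node l r ihl ihr =>
    simp only [inSub, size] at *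
    rcases h with ⟨hc, ha⟩ | h | ⟨ha1, hc1, h⟩
    · exact Or.inl ⟨hc, by omega⟩
    · have := inSub_bounds h
      exact Or.inr (Or.inl (ihl h hab (by omega)))
    · exact Or.inr (Or.inr ⟨by omega, hc1, ihr h (by omega) (by omega)⟩)

/-- Convexity, downward side: if `c` is in the subtree of `a` and `a ≤ b ≤ c` then
`b` is in the subtree of `a`. -/
lemma inSub_convex_right {T : BinTree} {a b c : ℕ} (h : inSub T c a)
    (hab : a ≤ b) (hbc : b ≤ c) : inSub T b a := by
  induction T generalizing a b c with
  | leaf => exact absurd h (by simp [inSub])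
  | node l r ihl ihr =>
    simp only [inSub, size] at *
    rcases h with ⟨ha, hc⟩ | h | ⟨hc1, ha1, h⟩
    · exact Or.inl ⟨ha, by omega⟩
    · have := inSub_bounds h
      exact Or.inr (Or.inl (ihl h hab (by omega)))
    · exact Or.inr (Or.inr ⟨by omega, ha1, ihr h (by omega) (by omega)⟩)

lemma inSub_le_rv {T : BinTree} {a b : ℕ} (h : inSub T a b) : a ≤ rv T b := by
  induction T generalizing a b with
  | leaf => exact absurd h (by simp [inSub])
  | node l r ihl ihr =>
    have hb := inSub_bounds h
    simp only [inSub, size] at *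
    rcases h with ⟨hc, ha⟩ | h | ⟨ha1, hb1, h⟩
    · rw [rv]; rw [if_neg (by omega), if_pos hc]; omega
    · have := inSub_bounds h
      rw [rv, if_pos (by omega)]
      exact ihl h
    · rw [rv, if_neg (by omega), if_neg (by omega)]
      have := ihr h; omega

lemma inSub_of_le_rv {T : BinTree} {a b : ℕ} (hb1 : 1 ≤ b) (hb2 : b ≤ T.size)
    (hba : b ≤ a) (har : a ≤ rv T b) : inSub T a b := by
  induction T generalizing a b with
  | leaf => simp [size] at hb2; omega
  | node l r ihl ihr =>
    simp only [inSub, size, rv] at *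
    by_cases h1 : b ≤ l.size
    · rw [if_pos h1] at har
      exact Or.inr (Or.inl (ihl hb1 h1 hba har))
    · rw [if_neg h1] at har
      by_cases h2 : b = l.size + 1
      · rw [if_pos h2] at har
        exact Or.inl ⟨h2, by omega⟩
      · rw [if_neg h2] at har
        refine Or.inr (Or.inr ⟨by omega, by omega, ihr (by omega) (by omega) (by omega) (by omega)⟩)

end BinTree
namespace BinTree

def reflect : BinTree → BinTree
  | leaf => leaf
  | node l r => node (reflect r) (reflect l)

@[simp] lemma size_reflect (T : BinTree) : (reflect T).size = T.size := by
  induction T with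
  | leaf => rfl
  | node l r ihl ihr => simp [reflect, size, ihl, ihr]; omega

@[simp] lemma reflect_reflect (T : BinTree) : reflect (reflect T) = T := by
  induction T with
  | leaf => rfl
  | node l r ihl ihr => simp [reflect, ihl, ihr]

lemma rot_reflect {T T' : BinTree} (h : Rot T T') : Rot (reflect T') (reflect T) := by
  induction h with
  | root A B C => exact Rot.root (reflect C) (reflect B) (reflect A)
  | left R _ ih => exact Rot.right _ ih
  | right L _ ih => exact Rot.left _ ih

lemma tamari_reflect {T T' : BinTree} (h : TamariLE T T') :
    TamariLE (reflect T') (reflect T) := by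
  induction h with
  | refl => exact Relation.ReflTransGen.refl
  | tail _ h ih => exact Relation.ReflTransGen.head (rot_reflect h) ih

lemma inSub_reflect {T : BinTree} {a b : ℕ} (h : inSub T a b) :
    inSub (reflect T) (T.size + 1 - a) (T.size + 1 - b) := by
  induction T generalizing a b with
  | leaf => exact absurd h (by simp [inSub])
  | node l r ihl ihr =>
    have hB := inSub_bounds h
    simp only [inSub, size, reflect, size_reflect] at *
    rcases h with ⟨hb, ha⟩ | h | ⟨ha1, hb1, h⟩
    · exact Or.inl ⟨by omega, by omega⟩
    · have := inSub_bounds h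
      refine Or.inr (Or.inr ⟨by omega, by omega, ?_⟩)
      have := ihl h
      have e1 : l.size + r.size + 1 + 1 - a - (r.size + 1) = l.size + 1 - a := by omega
      have e2 : l.size + r.size + 1 + 1 - b - (r.size + 1) = l.size + 1 - b := by omega
      rw [e1, e2]; exact this
    · have hb2 := inSub_bounds h
      refine Or.inr (Or.inl ?_)
      have := ihr h
      have e1 : l.size + r.size + 1 + 1 - a = r.size + 1 - (a - (l.size + 1)) := by omega
      have e2 : l.size + r.size + 1 + 1 - b = r.size + 1 - (b - (l.size + 1)) := by omega
      rw [e1, e2]; exact this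

lemma inSub_reflect_iff {T : BinTree} {a b : ℕ} (ha : 1 ≤ a) (ha' : a ≤ T.size)
    (hb : 1 ≤ b) (hb' : b ≤ T.size) :
    inSub (reflect T) (T.size + 1 - a) (T.size + 1 - b) ↔ inSub T a b := by
  constructor
  · intro h
    have := inSub_reflect h
    rw [reflect_reflect, size_reflect] at this
    have e1 : T.size + 1 - (T.size + 1 - a) = a := by omega
    have e2 : T.size + 1 - (T.size + 1 - b) = b := by omega
    rwa [e1, e2] at this
  · exact inSub_reflect

end BinTree
namespace BinTree

lemma rv_node_left {l r : BinTree} {b : ℕ} (h : b ≤ l.size) :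
    rv (node l r) b = rv l b := by rw [rv, if_pos h]

lemma rv_node_root (l r : BinTree) :
    rv (node l r) (l.size + 1) = l.size + r.size + 1 := by
  rw [rv, if_neg (by omega), if_pos rfl]

lemma rv_node_right {l r : BinTree} {b : ℕ} (h : l.size + 1 < b) :
    rv (node l r) b = rv r (b - (l.size + 1)) + (l.size + 1) := by
  rw [rv, if_neg (by omega), if_neg (by omega)]

/-- `rv` of the two sides of a root rotation. -/
lemma rv_rot_root (A B C : BinTree) (b : ℕ) (hb : b ≠ A.size + 1) :
    rv (node A (node B C)) b = rv (node (node A B) C) b := by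
  have hAB : (node A B).size = A.size + B.size + 1 := by simp only [size]
  by_cases h1 : b ≤ A.size
  · rw [rv_node_left h1, rv_node_left (show b ≤ (node A B).size by omega), rv_node_left h1]
  · by_cases h2 : b ≤ A.size + B.size + 1
    · have e1 : rv (node A (node B C)) b = rv B (b - (A.size + 1)) + (A.size + 1) := by
        rw [rv_node_right (by omega), rv_node_left (show b - (A.size + 1) ≤ B.size by omega)]
      have e2 : rv (node (node A B) C) b = rv B (b - (A.size + 1)) + (A.size + 1) := by
        rw [rv_node_left (show b ≤ (node A B).size by omega),
          rv_node_right (show A.size + 1 < b by omega)]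
      rw [e1, e2]
    · by_cases h3 : b = A.size + B.size + 2
      · have e1 : rv (node A (node B C)) b = A.size + B.size + C.size + 2 := by
          rw [rv_node_right (by omega), show b - (A.size + 1) = B.size + 1 by omega,
            rv_node_root]
          omega
        have e2 : rv (node (node A B) C) b = A.size + B.size + C.size + 2 := by
          rw [show b = (node A B).size + 1 by omega, rv_node_root]
          omega
        rw [e1, e2]
      · have e1 : rv (node A (node B C)) b
            = rv C (b - (A.size + B.size + 2)) + (A.size + B.size + 2) := by
          rw [rv_node_right (show A.size + 1 < b by omega),
            rv_node_right (show B.size + 1 < b - (A.size + 1) by omega),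
            show b - (A.size + 1) - (B.size + 1) = b - (A.size + B.size + 2) by omega]
          omega
        have e2 : rv (node (node A B) C) b
            = rv C (b - (A.size + B.size + 2)) + (A.size + B.size + 2) := by
          rw [rv_node_right (show (node A B).size + 1 < b by omega),
            show b - ((node A B).size + 1) = b - (A.size + B.size + 2) by rw [hAB]]
          omega
        rw [e1, e2]

lemma rv_rot_root_at (A B C : BinTree) :
    rv (node A (node B C)) (A.size + 1) = A.size + B.size + C.size + 2 := by
  rw [rv_node_root]; simp only [size]; omega

lemma rv_mono_rot {T T' : BinTree} (h : Rot T T') (b : ℕ) : rv T b ≤ rv T' b := by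
  induction h generalizing b with
  | root A B C =>
    by_cases hb : b = A.size + 1
    · subst hb
      rw [rv_rot_root_at, rv_node_left (by simp only [size]; omega), rv_node_root]
      omega
    · rw [rv_rot_root A B C b hb]
  | left R h ih =>
    rename_i L L'
    have hs : L'.size = L.size := size_rot h
    by_cases h1 : b ≤ L.size
    · rw [rv_node_left h1, rv_node_left (by omega)]; exact ih b
    · by_cases h2 : b = L.size + 1
      · subst h2; rw [rv_node_root, show L.size + 1 = L'.size + 1 by omega, rv_node_root]; omega
      · rw [rv_node_right (by omega), rv_node_right (by omega), hs]
  | right L h ih =>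
    rename_i R R'
    by_cases h1 : b ≤ L.size
    · rw [rv_node_left h1, rv_node_left h1]
    · by_cases h2 : b = L.size + 1
      · subst h2; rw [rv_node_root, rv_node_root]
        have := size_rot h; omega
      · rw [rv_node_right (by omega), rv_node_right (by omega)]
        have := ih (b - (L.size + 1)); omega

lemma rv_inj : ∀ A B : BinTree, A.size = B.size →
    (∀ b, 1 ≤ b → b ≤ A.size → rv A b = rv B b) → A = B := by
  intro A
  induction A with
  | leaf =>
    intro B hs _
    cases B with
    | leaf => rfl
    | node l r => simp [size] at hs
  | node l r ihl ihr =>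
    intro B hs hv
    cases B with
    | leaf => simp [size] at hs
    | node l' r' =>
      simp only [size] at hs
      have hls : l.size = l'.size := by
        rcases lt_trichotomy l.size l'.size with h | h | h
        · exfalso
          have h1 := hv (l.size + 1) (by omega) (by simp only [size]; omega)
          rw [rv_node_root, rv_node_left (by omega)] at h1
          have := rv_le_size l' (l.size + 1); omega
        · exact h
        · exfalso
          have h1 := hv (l'.size + 1) (by omega) (by simp only [size]; omega)
          rw [rv_node_left (by omega), rv_node_root] at h1
          have := rv_le_size l (l'.size + 1); omega
      have hl : l = l' := by
        refine ihl l' hls ?_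
        intro b hb1 hb2
        have := hv b hb1 (by simp only [size]; omega)
        rwa [rv_node_left hb2, rv_node_left (by omega)] at this
      have hr : r = r' := by
        refine ihr r' (by omega) ?_
        intro b hb1 hb2
        have := hv (b + (l.size + 1)) (by omega) (by simp only [size]; omega)
        rw [rv_node_right (by omega), rv_node_right (by omega), hls] at this
        simp only [Nat.add_sub_cancel] at this
        omega
      rw [hl, hr]

end BinTree
namespace BinTree

/-- If label `i` is not on a right branch below a smaller-labelled ancestor with the same
subtree maximum (hypothesis `h4`), and its subtree maximum is not global, then `i` is a
left child, and rotating at the edge above `i` increases `rv` at `i` exactly to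
`rv A (rv A i + 1)`, leaving all other values unchanged. -/
lemma rot_at : ∀ (A : BinTree) (i : ℕ), 1 ≤ i → i ≤ A.size → rv A i < A.size →
    (∀ j, 1 ≤ j → j < i → rv A j ≠ rv A i) →
    ∃ A', Rot A A' ∧ rv A' i = rv A (rv A i + 1) ∧ ∀ b, b ≠ i → rv A' b = rv A b := by
  intro A
  induction A with
  | leaf => intro i h1 h2; simp [size] at h2; omega
  | node l r ihl ihr =>
    intro i h1 h2 h3 h4
    simp only [size] at h2 h3
    by_cases hi : i = l.size + 1
    · exfalso; rw [hi, rv_node_root] at h3; omega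
    · by_cases hil : i ≤ l.size
      · -- i in the left subtree
        have hrv : rv (node l r) i = rv l i := rv_node_left hil
        by_cases hk : rv l i < l.size
        · -- rotation inside l
          obtain ⟨l', hrot, he1, he2⟩ := ihl i h1 hil hk (by
            intro j hj1 hj2
            have := h4 j hj1 (by omega)
            rwa [rv_node_left (by omega), rv_node_left hil] at this)
          have hsz : l'.size = l.size := size_rot hrot
          refine ⟨node l' r, Rot.left r hrot, ?_, ?_⟩
          · rw [rv_node_left (by omega), he1, hrv, rv_node_left (by omega)]
          · intro b hb
            by_cases hbl : b ≤ l.size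
            · rw [rv_node_left (by omega), rv_node_left hbl, he2 b hb]
            · by_cases hbm : b = l.size + 1
              · have eL : rv (node l' r) b = l'.size + r.size + 1 := by
                  rw [hbm, show l.size + 1 = l'.size + 1 by omega]; exact rv_node_root l' r
                have eR : rv (node l r) b = l.size + r.size + 1 := by
                  rw [hbm]; exact rv_node_root l r
                omega
              · rw [rv_node_right (by omega), rv_node_right (by omega), hsz]
        · -- i is the root of l, rotate at the root
          have hkl : rv l i = l.size := le_antisymm (rv_le_size l i) (by omega)
          cases l with
          | leaf => simp [size] at hil; omega
          | node l1 l2 =>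
            have hsz1 : (node l1 l2).size = l1.size + l2.size + 1 := by simp only [size]
            have hieq : i = l1.size + 1 := by
              rcases lt_trichotomy i (l1.size + 1) with h | h | h
              · exfalso
                rw [rv_node_left (by omega)] at hkl
                have := rv_le_size l1 i
                omega
              · exact h
              · exfalso
                refine h4 (l1.size + 1) (by omega) (by omega) ?_
                rw [rv_node_left (by omega), rv_node_left hil, rv_node_root, hkl, hsz1]
            refine ⟨node l1 (node l2 r), Rot.root l1 l2 r, ?_, ?_⟩
            · have hin : rv (node (node l1 l2) r) (l1.size + 1) = (node l1 l2).size := by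
                rw [rv_node_left (show l1.size + 1 ≤ (node l1 l2).size by omega), rv_node_root]
                omega
              have hout : rv (node (node l1 l2) r) ((node l1 l2).size + 1)
                  = (node l1 l2).size + r.size + 1 := rv_node_root _ r
              rw [hieq, rv_rot_root_at, hin, hout]
              omega
            · intro b hb
              rw [hieq] at hb
              exact rv_rot_root l1 l2 r b hb
      · -- i in the right subtree
        have him : l.size + 1 < i := by omega
        have hrv : rv (node l r) i = rv r (i - (l.size + 1)) + (l.size + 1) :=
          rv_node_right him
        obtain ⟨r', hrot, he1, he2⟩ := ihr (i - (l.size + 1)) (by omega) (by omega)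
          (by rw [hrv] at h3; omega) (by
            intro j hj1 hj2
            intro hcon
            refine h4 (j + (l.size + 1)) (by omega) (by omega) ?_
            rw [rv_node_right (by omega), rv_node_right him]
            simp only [Nat.add_sub_cancel]
            omega)
        refine ⟨node l r', Rot.right l hrot, ?_, ?_⟩
        · rw [rv_node_right him, he1, hrv]
          rw [rv_node_right (show l.size + 1 < rv r (i - (l.size + 1)) + (l.size + 1) + 1 by omega)]
          congr 1
          congr 1
          omega
        · intro b hb
          by_cases hbl : b ≤ l.size
          · rw [rv_node_left hbl, rv_node_left hbl]
          · by_cases hbm : b = l.size + 1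
            · rw [hbm, rv_node_root, rv_node_root, size_rot hrot]
            · rw [rv_node_right (by omega), rv_node_right (by omega),
                he2 (b - (l.size + 1)) (by omega)]

end BinTree
namespace BinTree

lemma tamari_rv {A B : BinTree} (h : TamariLE A B) (b : ℕ) : rv A b ≤ rv B b := by
  induction h with
  | refl => exact le_refl _
  | tail _ h ih => exact le_trans ih (rv_mono_rot h b)

private lemma rv_le_tamari_aux : ∀ (M : ℕ) (A B : BinTree), A.size = B.size →
    (∀ b, 1 ≤ b → b ≤ A.size → rv A b ≤ rv B b) →
    (∑ b ∈ Finset.Icc 1 A.size, (rv B b - rv A b)) < M → TamariLE A B := by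
  intro M
  induction M with
  | zero => omega
  | succ M ih =>
    intro A B hs hle hM
    by_cases heq : ∀ b, 1 ≤ b → b ≤ A.size → rv A b = rv B b
    · rw [rv_inj A B hs heq]; exact Relation.ReflTransGen.refl
    · push_neg at heq
      obtain ⟨b0, hb01, hb02, hb0⟩ := heq
      have hP : ∃ j, 1 ≤ j ∧ j ≤ A.size ∧ rv A j < rv B j :=
        ⟨b0, hb01, hb02, lt_of_le_of_ne (hle b0 hb01 hb02) hb0⟩
      classical
      obtain ⟨i, hmin, hi1, hi2, hi3⟩ :
          ∃ i, (∀ j, j < i → ¬ (1 ≤ j ∧ j ≤ A.size ∧ rv A j < rv B j)) ∧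
            1 ≤ i ∧ i ≤ A.size ∧ rv A i < rv B i :=
        ⟨Nat.find hP, fun j hj => Nat.find_min hP hj, Nat.find_spec hP⟩
      have hkn : rv A i < A.size := by have := rv_le_size B i; omega
      have hik : i ≤ rv A i := le_rv_self A i hi2
      have h4 : ∀ j, 1 ≤ j → j < i → rv A j ≠ rv A i := by
        intro j hj1 hj2 hcon
        have hnj := hmin j hj2
        have hle' := hle j hj1 (by omega)
        have hAB : rv A j = rv B j := by omega
        have := rv_nest B j i hj1 (by omega) (by omega)
        omega
      obtain ⟨A', hrot, he1, he2⟩ := rot_at A i hi1 hi2 hkn h4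
      have hsz : A'.size = A.size := size_rot hrot
      have hknew : rv A' i ≤ rv B i := by
        rw [he1]
        have h1 : rv A (rv A i + 1) ≤ rv B (rv A i + 1) := hle _ (by omega) (by omega)
        have h2 : rv B (rv A i + 1) ≤ rv B i := rv_nest B i (rv A i + 1) hi1 (by omega) (by omega)
        omega
      have hgt : rv A i < rv A' i := by
        rw [he1]
        have := le_rv_self A (rv A i + 1) (by omega)
        omega
      have hle' : ∀ b, 1 ≤ b → b ≤ A'.size → rv A' b ≤ rv B b := by
        intro b h1 h2
        by_cases hbi : b = i
        · rw [hbi]; exact hknew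
        · rw [he2 b hbi]; exact hle b h1 (by omega)
      have hsum : (∑ b ∈ Finset.Icc 1 A'.size, (rv B b - rv A' b))
          < (∑ b ∈ Finset.Icc 1 A.size, (rv B b - rv A b)) := by
        rw [hsz]
        refine Finset.sum_lt_sum (fun b hb => ?_) ⟨i, Finset.mem_Icc.mpr ⟨hi1, hi2⟩, ?_⟩
        · by_cases hbi : b = i
          · subst hbi; omega
          · rw [he2 b hbi]
        · omega
      exact Relation.ReflTransGen.head hrot
        (ih A' B (by omega) hle' (by omega))

lemma rv_le_tamari {A B : BinTree} (hs : A.size = B.size)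
    (hle : ∀ b, 1 ≤ b → b ≤ A.size → rv A b ≤ rv B b) : TamariLE A B :=
  rv_le_tamari_aux ((∑ b ∈ Finset.Icc 1 A.size, (rv B b - rv A b)) + 1) A B hs hle
    (Nat.lt_succ_self _)

end BinTree
namespace BinTree

lemma decRel_iff {T : BinTree} {a b : ℕ} :
    decRel T a b ↔ 1 ≤ b ∧ b ≤ T.size ∧ b < a ∧ a ≤ rv T b := by
  constructor
  · rintro ⟨hba, hne, hsub⟩
    have := inSub_bounds hsub
    exact ⟨by omega, by omega, hba, inSub_le_rv hsub⟩
  · rintro ⟨h1, h2, h3, h4⟩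
    exact ⟨h3, by omega, inSub_of_le_rv h1 h2 (by omega) h4⟩

lemma dec_mono {T T' : BinTree} (h : TamariLE T T') {a b : ℕ} (hd : decRel T a b) :
    decRel T' a b := by
  rw [decRel_iff] at hd ⊢
  have hs := size_tamari h
  exact ⟨hd.1, by omega, hd.2.2.1, le_trans hd.2.2.2 (tamari_rv h b)⟩

lemma dec_le_tamari {A B : BinTree} (hs : A.size = B.size)
    (h : ∀ a b, decRel A a b → decRel B a b) : TamariLE A B := by
  refine rv_le_tamari hs ?_
  intro b h1 h2
  rcases Nat.eq_or_lt_of_le (le_rv_self A b h2) with he | hlt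
  · rw [← he]; exact le_rv_self B b (by omega)
  · have hd : decRel A (rv A b) b := decRel_iff.mpr ⟨h1, h2, hlt, le_refl _⟩
    exact (decRel_iff.mp (h _ _ hd)).2.2.2

lemma incRel_iff_reflect {T : BinTree} {a b : ℕ} :
    incRel T a b ↔ 1 ≤ a ∧ a ≤ T.size ∧ 1 ≤ b ∧ b ≤ T.size ∧
      decRel (reflect T) (T.size + 1 - a) (T.size + 1 - b) := by
  constructor
  · rintro ⟨hab, hne, hsub⟩
    have hB := inSub_bounds hsub
    refine ⟨by omega, by omega, by omega, by omega, by omega, by omega, ?_⟩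
    exact inSub_reflect hsub
  · rintro ⟨ha1, ha2, hb1, hb2, hlt, hne, hsub⟩
    refine ⟨by omega, by omega, ?_⟩
    rwa [inSub_reflect_iff (by omega) ha2 (by omega) hb2] at hsub

lemma inc_antitone {T T' : BinTree} (h : TamariLE T T') {a b : ℕ} (hi : incRel T' a b) :
    incRel T a b := by
  have hs : T'.size = T.size := size_tamari h
  rw [incRel_iff_reflect] at hi ⊢
  obtain ⟨ha1, ha2, hb1, hb2, hd⟩ := hi
  rw [hs] at hd
  exact ⟨ha1, by omega, hb1, by omega, dec_mono (tamari_reflect h) hd⟩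

lemma inc_le_tamari {A B : BinTree} (hs : A.size = B.size)
    (h : ∀ a b, incRel B a b → incRel A a b) : TamariLE A B := by
  have h' : ∀ x y, decRel (reflect B) x y → decRel (reflect A) x y := by
    intro x y hd
    have hb := (decRel_iff.mp hd).1
    have hb2 := (decRel_iff.mp hd).2.1
    have hx := (decRel_iff.mp hd).2.2.1
    have hxle : x ≤ (reflect B).size := by
      have := (decRel_iff.mp hd).2.2.2
      exact le_trans this (rv_le_size _ _)
    rw [size_reflect] at hb2 hxle
    have hi : incRel B (B.size + 1 - x) (B.size + 1 - y) := by
      rw [incRel_iff_reflect]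
      refine ⟨by omega, by omega, by omega, by omega, ?_⟩
      rw [show B.size + 1 - (B.size + 1 - x) = x by omega,
        show B.size + 1 - (B.size + 1 - y) = y by omega]
      exact hd
    have := h _ _ hi
    rw [incRel_iff_reflect] at this
    obtain ⟨ha1, ha2, hb1', hb2', hd'⟩ := this
    rwa [hs, show B.size + 1 - (B.size + 1 - x) = x by omega,
      show B.size + 1 - (B.size + 1 - y) = y by omega] at hd'
  have : TamariLE (reflect B) (reflect A) :=
    dec_le_tamari (by simp [hs]) h'
  have h2 := tamari_reflect this
  rwa [reflect_reflect, reflect_reflect] at h2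

lemma bst_trans {S : BinTree} {a b c : ℕ} (h1 : bstRel S a b) (h2 : bstRel S b c) :
    bstRel S a c := by
  refine ⟨?_, inSub_trans h1.2 h2.2⟩
  intro he
  subst he
  exact h2.1 (inSub_antisymm h2.2 h1.2)

end BinTree
namespace BinTree

private lemma tree_of_vec_aux : ∀ (N n : ℕ) (f : ℕ → ℕ), n ≤ N →
    (∀ i, 1 ≤ i → i ≤ n → i ≤ f i ∧ f i ≤ n) →
    (∀ i j, 1 ≤ i → i ≤ j → j ≤ f i → j ≤ n → f j ≤ f i) →
    ∃ T : BinTree, T.size = n ∧ ∀ i, 1 ≤ i → i ≤ n → rv T i = f i := by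
  intro N
  induction N with
  | zero =>
    intro n f hn _ _
    refine ⟨leaf, by simp only [size]; omega, ?_⟩
    intro i h1 h2; omega
  | succ N ih =>
    intro n f hn hb hnest
    rcases Nat.eq_zero_or_pos n with h0 | h0
    · exact ⟨leaf, by simp [size, h0], by omega⟩
    · classical
      have hex : ∃ i, 1 ≤ i ∧ i ≤ n ∧ f i = n := by
        refine ⟨n, h0, le_refl n, ?_⟩
        have := hb n h0 (le_refl n); omega
      obtain ⟨m, hmin, hm1, hm2, hm3⟩ :
          ∃ m, (∀ j, j < m → ¬ (1 ≤ j ∧ j ≤ n ∧ f j = n)) ∧ 1 ≤ m ∧ m ≤ n ∧ f m = n :=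
        ⟨Nat.find hex, fun j hj => Nat.find_min hex hj, Nat.find_spec hex⟩
      have hsmall : ∀ i, 1 ≤ i → i < m → f i < m := by
        intro i h1 h2
        by_contra hcon
        push_neg at hcon
        have hfi := hb i h1 (by omega)
        have : f m ≤ f i := hnest i m h1 (by omega) (by omega) (by omega)
        exact hmin i h2 ⟨h1, by omega, by omega⟩
      -- left subtree from f restricted to [1, m-1]
      obtain ⟨L, hL1, hL2⟩ := ih (m - 1) f (by omega)
        (fun i h1 h2 => ⟨(hb i h1 (by omega)).1, by have := hsmall i h1 (by omega); omega⟩)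
        (fun i j h1 h2 h3 h4 => hnest i j h1 h2 h3 (by omega))
      -- right subtree from the shifted vector
      obtain ⟨R, hR1, hR2⟩ := ih (n - m) (fun j => f (j + m) - m) (by omega)
        (fun i h1 h2 => by
          have := hb (i + m) (by omega) (by omega); omega)
        (fun i j h1 h2 h3 h4 => by
          have h5 := hb (i + m) (by omega) (by omega)
          have := hnest (i + m) (j + m) (by omega) (by omega) (by omega) (by omega)
          omega)
      refine ⟨node L R, by simp only [size]; omega, ?_⟩
      intro i h1 h2
      by_cases hc1 : i ≤ L.size
      · rw [rv_node_left hc1, hL2 i h1 (by omega)]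
      · by_cases hc2 : i = L.size + 1
        · rw [hc2, rv_node_root, show L.size + 1 = m by omega, hm3]
          omega
        · rw [rv_node_right (by omega), hR2 (i - (L.size + 1)) (by omega) (by omega)]
          have : i - (L.size + 1) + m = i := by omega
          rw [this]
          have := hb i h1 h2
          have him : m < i := by omega
          have : m ≤ f i := by
            rcases Nat.lt_or_ge (f i) m with hlt | hge
            · exfalso
              have := hnest i i h1 (le_refl i) (by omega) (by omega)
              omega
            · omega
          omega
      done

lemma tree_of_vec (n : ℕ) (f : ℕ → ℕ)
    (hb : ∀ i, 1 ≤ i → i ≤ n → i ≤ f i ∧ f i ≤ n)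
    (hnest : ∀ i j, 1 ≤ i → i ≤ j → j ≤ f i → j ≤ n → f j ≤ f i) :
    ∃ T : BinTree, T.size = n ∧ ∀ i, 1 ≤ i → i ≤ n → rv T i = f i :=
  tree_of_vec_aux n n f (le_refl n) hb hnest

end BinTree
section IPlemmas

open Relation

variable {step : ℕ → ℕ → Prop} {n : ℕ}

lemma transGen_bounds (hb : ∀ a b, step a b → 1 ≤ a ∧ a ≤ n ∧ 1 ≤ b ∧ b ≤ n)
    {a b : ℕ} (h : TransGen step a b) : 1 ≤ a ∧ a ≤ n ∧ 1 ≤ b ∧ b ≤ n := by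
  induction h with
  | single h => exact hb _ _ h
  | tail h1 h2 ih => have := hb _ _ h2; omega

lemma transGen_axiom1 (hax : ∀ a b c, a < b → b < c → step a c → step b c)
    {a c : ℕ} (h : TransGen step a c) : ∀ b, a < b → b < c → TransGen step b c := by
  induction h using TransGen.head_induction_on with
  | single h =>
    intro b h1 h2
    exact TransGen.single (hax _ _ _ h1 h2 h)
  | head hstep htail ih =>
    rename_i a' x
    intro b h1 h2
    rcases lt_trichotomy b x with hbx | hbx | hbx
    · exact TransGen.head (hax _ _ _ h1 hbx hstep) htail
    · rw [hbx]; exact htail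
    · exact ih b hbx h2

lemma transGen_axiom2 (hax : ∀ a b c, a < b → b < c → step c a → step b a)
    {c a : ℕ} (h : TransGen step c a) : ∀ b, a < b → b < c → TransGen step b a := by
  induction h using TransGen.head_induction_on with
  | single h =>
    intro b h1 h2
    exact TransGen.single (hax _ _ _ h1 h2 h)
  | head hstep htail ih =>
    rename_i c' x
    intro b h1 h2
    rcases lt_trichotomy b x with hbx | hbx | hbx
    · exact ih b h1 hbx
    · rw [hbx]; exact htail
    · exact TransGen.head (hax _ _ _ hbx h2 hstep) htail

lemma transGen_irrefl (hirr : ∀ a, ¬ step a a)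
    (hanti : ∀ a b, TransGen step a b → TransGen step b a → a = b)
    (a : ℕ) : ¬ TransGen step a a := by
  intro h
  cases h with
  | single h => exact hirr a h
  | tail h1 h2 =>
    rename_i b
    by_cases hba : b = a
    · exact hirr a (hba ▸ h2)
    · exact hba (hanti b a (TransGen.single h2) h1)

lemma isIntervalPoset_transGen
    (hb : ∀ a b, step a b → 1 ≤ a ∧ a ≤ n ∧ 1 ≤ b ∧ b ≤ n)
    (hirr : ∀ a, ¬ step a a)
    (hax1 : ∀ a b c, a < b → b < c → step a c → step b c)
    (hax2 : ∀ a b c, a < b → b < c → step c a → step b a)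
    (hanti : ∀ a b, TransGen step a b → TransGen step b a → a = b) :
    IsIntervalPoset n (TransGen step) :=
  ⟨fun _ _ h => transGen_bounds hb h,
   transGen_irrefl hirr hanti,
   fun _ _ _ h1 h2 => TransGen.trans h1 h2,
   fun a b c hab hbc h => transGen_axiom1 hax1 h b hab hbc,
   fun a b c hab hbc h => transGen_axiom2 hax2 h b hab hbc⟩

end IPlemmas
open BinTree in
lemma exists_maximal_rel (n : ℕ) (R : ℕ → ℕ → Prop) (hn : 1 ≤ n)
    (hb : ∀ a b, R a b → 1 ≤ a ∧ a ≤ n ∧ 1 ≤ b ∧ b ≤ n)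
    (htr : ∀ a b c, R a b → R b c → R a c)
    (hirr : ∀ a, ¬ R a a) :
    ∃ ρ, 1 ≤ ρ ∧ ρ ≤ n ∧ ∀ b, ¬ R ρ b := by
  classical
  let α := {x : ℕ // x ∈ Set.Icc 1 n}
  haveI : Finite α := (Set.finite_Icc 1 n).to_subtype
  let rr : α → α → Prop := fun x y => R y.1 x.1
  haveI : IsTrans α rr := ⟨fun x y z h1 h2 => htr _ _ _ h2 h1⟩
  haveI : IsIrrefl α rr := ⟨fun x => hirr x.1⟩
  have hwf : WellFounded rr := Finite.wellFounded_of_trans_of_irrefl rr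
  obtain ⟨m, -, hmin⟩ := hwf.has_min Set.univ ⟨⟨1, by simp; omega⟩, trivial⟩
  refine ⟨m.1, m.2.1, m.2.2, ?_⟩
  intro b hRb
  have hbb := hb _ _ hRb
  exact hmin ⟨b, by simp; omega⟩ trivial hRb

open BinTree in
private lemma tree_of_poset_aux : ∀ (N n : ℕ) (R : ℕ → ℕ → Prop), n ≤ N →
    IsIntervalPoset n R →
    ∃ S : BinTree, S.size = n ∧ ∀ a b, R a b → bstRel S a b := by
  intro N
  induction N with
  | zero =>
    intro n R hn hip
    refine ⟨leaf, by simp [size]; omega, ?_⟩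
    intro a b h
    have := hip.1 a b h
    omega
  | succ N ih =>
    intro n R hn hip
    obtain ⟨hb, hirr, htr, hax1, hax2⟩ := hip
    rcases Nat.eq_zero_or_pos n with h0 | h0
    · refine ⟨leaf, by simp [size]; omega, ?_⟩
      intro a b h
      have := hb a b h
      omega
    · obtain ⟨ρ, hρ1, hρ2, hρmax⟩ := exists_maximal_rel n R h0 hb htr hirr
      -- left restriction
      obtain ⟨L, hL1, hL2⟩ := ih (ρ - 1) (fun a b => a < ρ ∧ b < ρ ∧ R a b) (by omega)
        ⟨fun a b h => by have := hb a b h.2.2; omega,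
         fun a h => hirr a h.2.2,
         fun a b c h1 h2 => ⟨h1.1, h2.2.1, htr _ _ _ h1.2.2 h2.2.2⟩,
         fun a b c h1 h2 h => ⟨by omega, h.2.1, hax1 _ _ _ h1 h2 h.2.2⟩,
         fun a b c h1 h2 h => ⟨by omega, h.2.1, hax2 _ _ _ h1 h2 h.2.2⟩⟩
      -- right restriction
      obtain ⟨Rt, hR1, hR2⟩ := ih (n - ρ) (fun a b => 1 ≤ a ∧ 1 ≤ b ∧ a + ρ ≤ n ∧ b + ρ ≤ n ∧
          R (a + ρ) (b + ρ)) (by omega)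
        ⟨fun a b h => by omega,
         fun a h => hirr _ h.2.2.2.2,
         fun a b c h1 h2 => ⟨h1.1, h2.2.1, h1.2.2.1, h2.2.2.2.1, htr _ _ _ h1.2.2.2.2 h2.2.2.2.2⟩,
         fun a b c h1 h2 h => ⟨by omega, h.2.1, by omega, h.2.2.2.1,
           hax1 _ _ _ (by omega) (by omega) h.2.2.2.2⟩,
         fun a b c h1 h2 h => ⟨by omega, h.2.1, by omega, h.2.2.2.1,
           hax2 _ _ _ (by omega) (by omega) h.2.2.2.2⟩⟩
      refine ⟨node L Rt, by simp only [size]; omega, ?_⟩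
      intro a b h
      have hbd := hb a b h
      have hne : a ≠ b := fun he => hirr a (he ▸ h)
      have hmL : L.size = ρ - 1 := hL1
      rcases lt_trichotomy b ρ with hbρ | hbρ | hbρ
      · -- b in the left part, so a must be too
        have haρ : a < ρ := by
          rcases lt_trichotomy a ρ with h' | h' | h'
          · exact h'
          · exact absurd h (h' ▸ hρmax b)
          · exact absurd (hax2 b ρ a hbρ h' h) (hρmax b)
        have := hL2 a b ⟨haρ, hbρ, h⟩
        exact ⟨hne, Or.inr (Or.inl this.2)⟩
      · -- b is the root
        exact ⟨hne, Or.inl ⟨by omega, by omega, by omega⟩⟩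
      · -- b in the right part, so a must be too
        have haρ : ρ < a := by
          rcases lt_trichotomy a ρ with h' | h' | h'
          · exact absurd (hax1 a ρ b h' hbρ h) (hρmax b)
          · exact absurd h (h' ▸ hρmax b)
          · exact h'
        have := hR2 (a - ρ) (b - ρ) ⟨by omega, by omega, by omega, by omega,
          by rw [show a - ρ + ρ = a by omega, show b - ρ + ρ = b by omega]; exact h⟩
        refine ⟨hne, Or.inr (Or.inr ⟨by omega, by omega, ?_⟩)⟩
        rw [show a - (L.size + 1) = a - ρ by omega, show b - (L.size + 1) = b - ρ by omega]
        exact this.2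

open BinTree in
lemma tree_of_poset (n : ℕ) (R : ℕ → ℕ → Prop) (hip : IsIntervalPoset n R) :
    ∃ S : BinTree, S.size = n ∧ ∀ a b, R a b → bstRel S a b :=
  tree_of_poset_aux n n R (le_refl n) hip
open BinTree in
lemma exists_dec_tree (n : ℕ) (R : ℕ → ℕ → Prop) (hip : IsIntervalPoset n R) :
    ∃ U : BinTree, U.size = n ∧ (∀ a b, decRel U a b ↔ (b < a ∧ R a b)) := by
  classical
  obtain ⟨hb, hirr, htr, hax1, hax2⟩ := hip
  set f : ℕ → ℕ := fun b => max b (((Finset.Icc 1 n).filter (fun a => R a b)).sup id) with hf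
  have hsup_le : ∀ b, (((Finset.Icc 1 n).filter (fun a => R a b)).sup id) ≤ n := by
    intro b
    refine Finset.sup_le ?_
    intro a ha
    simp only [Finset.mem_filter, Finset.mem_Icc] at ha
    exact ha.1.2
  have hfb : ∀ b, 1 ≤ b → b ≤ n → b ≤ f b ∧ f b ≤ n := by
    intro b h1 h2
    exact ⟨le_max_left _ _, max_le h2 (hsup_le b)⟩
  have hii : ∀ a b, R a b → b < a → a ≤ f b := by
    intro a b h hba
    have hbd := hb a b h
    refine le_trans ?_ (le_max_right _ _)
    exact Finset.le_sup (f := id) (by simp only [Finset.mem_filter, Finset.mem_Icc]; exact ⟨⟨hbd.1, hbd.2.1⟩, h⟩)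
  have hiii : ∀ a b, 1 ≤ b → b ≤ n → b < a → a ≤ f b → R a b := by
    intro a b h1 h2 hba hle
    have hsup : a ≤ (((Finset.Icc 1 n).filter (fun a => R a b)).sup id) := by
      rcases max_le_iff.mp (le_refl (f b)) with _
      simp only [hf] at hle
      omega
    have hne : ((Finset.Icc 1 n).filter (fun a => R a b)).Nonempty := by
      rcases Finset.eq_empty_or_nonempty ((Finset.Icc 1 n).filter (fun a => R a b)) with he | hne
      · rw [he] at hsup; simp at hsup; omega
      · exact hne
    obtain ⟨a', ha'mem, ha'⟩ := Finset.exists_mem_eq_sup _ hne id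
    simp only [Finset.mem_filter, Finset.mem_Icc] at ha'mem
    have haa' : a ≤ a' := by rw [ha'] at hsup; exact hsup
    rcases Nat.eq_or_lt_of_le haa' with he | hlt
    · rw [he]; exact ha'mem.2
    · exact hax2 b a a' hba hlt ha'mem.2
  have hnest : ∀ i j, 1 ≤ i → i ≤ j → j ≤ f i → j ≤ n → f j ≤ f i := by
    intro i j h1 h2 h3 h4
    rcases Nat.eq_or_lt_of_le h2 with he | hij
    · rw [he]
    · have hRji : R j i := hiii j i h1 (by
        have := hfb i h1 (by omega)
        omega) hij h3
      have hjle : j ≤ f j := (hfb j (by omega) h4).1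
      rcases Nat.eq_or_lt_of_le hjle with he | hfj
      · rw [← he]; exact h3
      · have hRfj : R (f j) j := hiii (f j) j (by omega) h4 hfj (le_refl _)
        have : R (f j) i := htr _ _ _ hRfj hRji
        exact hii _ _ this (by omega)
  obtain ⟨U, hU1, hU2⟩ := BinTree.tree_of_vec n f hfb hnest
  refine ⟨U, hU1, ?_⟩
  intro a b
  rw [decRel_iff]
  constructor
  · rintro ⟨h1, h2, h3, h4⟩
    rw [hU1] at h2
    rw [hU2 b h1 h2] at h4
    exact ⟨h3, hiii a b h1 h2 h3 h4⟩
  · rintro ⟨hba, hR⟩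
    have hbd := hb a b hR
    refine ⟨by omega, by omega, hba, ?_⟩
    rw [hU2 b (by omega) (by omega)]
    exact hii a b hR hba

open BinTree in
lemma exists_inc_tree (n : ℕ) (R : ℕ → ℕ → Prop) (hip : IsIntervalPoset n R) :
    ∃ U' : BinTree, U'.size = n ∧ (∀ a b, incRel U' a b ↔ (a < b ∧ R a b)) := by
  obtain ⟨hb, hirr, htr, hax1, hax2⟩ := hip
  set Rm : ℕ → ℕ → Prop := fun a b =>
    1 ≤ a ∧ a ≤ n ∧ 1 ≤ b ∧ b ≤ n ∧ R (n + 1 - a) (n + 1 - b) with hRm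
  have hipm : IsIntervalPoset n Rm := by
    refine ⟨fun a b h => ⟨h.1, h.2.1, h.2.2.1, h.2.2.2.1⟩,
      fun a h => hirr _ h.2.2.2.2,
      fun a b c h1 h2 => ⟨h1.1, h1.2.1, h2.2.2.1, h2.2.2.2.1, htr _ _ _ h1.2.2.2.2 h2.2.2.2.2⟩,
      ?_, ?_⟩
    · intro a b c h1 h2 h
      obtain ⟨ha1, ha2, hc1, hc2, hR⟩ := h
      exact ⟨by omega, by omega, hc1, hc2,
        hax2 (n + 1 - c) (n + 1 - b) (n + 1 - a) (by omega) (by omega) hR⟩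
    · intro a b c h1 h2 h
      obtain ⟨hc1, hc2, ha1, ha2, hR⟩ := h
      exact ⟨by omega, by omega, ha1, ha2,
        hax1 (n + 1 - c) (n + 1 - b) (n + 1 - a) (by omega) (by omega) hR⟩
  obtain ⟨V, hV1, hV2⟩ := exists_dec_tree n Rm hipm
  refine ⟨reflect V, by simp [hV1], ?_⟩
  intro a b
  rw [incRel_iff_reflect]
  simp only [size_reflect, reflect_reflect, hV1]
  constructor
  · rintro ⟨ha1, ha2, hb1, hb2, hd⟩
    rw [hV2] at hd
    obtain ⟨hlt, hm⟩ := hd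
    refine ⟨by omega, ?_⟩
    have := hm.2.2.2.2
    rwa [show n + 1 - (n + 1 - a) = a by omega, show n + 1 - (n + 1 - b) = b by omega] at this
  · rintro ⟨hab, hR⟩
    have hbd := hb a b hR
    refine ⟨by omega, by omega, by omega, by omega, ?_⟩
    rw [hV2]
    refine ⟨by omega, by omega, by omega, by omega, by omega, ?_⟩
    rwa [show n + 1 - (n + 1 - a) = a by omega, show n + 1 - (n + 1 - b) = b by omega]
/-- Let `[T1,T1']` and `[T2,T2']` be Tamari intervals of size `n` with
interval-posets `I1 = IP[T1,T1']` and `I2 = IP[T2,T2']`. There is a binary tree `S` with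
`T1 ≤ S ≤ T1'` and `T2 ≤ S ≤ T2'` iff the transitive closure `R` of the union of the
relations of `I1` and `I2` is antisymmetric (hence a poset); and in that case `R` is an
interval-poset, equal to `IP[U,U']` for binary trees `U ≤ U'` whose Tamari interval is the
intersection of the two given intervals. -/
theorem intervalPoset_intersection (n : ℕ) (T1 T1' T2 T2' : BinTree)
    (h1 : T1.size = n) (h1' : T1'.size = n) (h2 : T2.size = n) (h2' : T2'.size = n)
    (ht1 : TamariLE T1 T1') (ht2 : TamariLE T2 T2')
    (R : ℕ → ℕ → Prop)
    (hR : R = Relation.TransGen (fun a b => IPrel T1 T1' a b ∨ IPrel T2 T2' a b)) :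
    ((∃ S : BinTree, S.size = n ∧ TamariLE T1 S ∧ TamariLE S T1' ∧
        TamariLE T2 S ∧ TamariLE S T2') ↔
      (∀ a b, R a b → R b a → a = b)) ∧
    ((∀ a b, R a b → R b a → a = b) →
      IsIntervalPoset n R ∧
      ∃ U U' : BinTree, U.size = n ∧ U'.size = n ∧ TamariLE U U' ∧
        (∀ a b, R a b ↔ IPrel U U' a b) ∧
        (∀ S : BinTree, (TamariLE U S ∧ TamariLE S U') ↔
          (TamariLE T1 S ∧ TamariLE S T1' ∧ TamariLE T2 S ∧ TamariLE S T2'))) := by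
  subst hR
  set step : ℕ → ℕ → Prop := fun a b => IPrel T1 T1' a b ∨ IPrel T2 T2' a b with hstepdef
  -- basic properties of the one-step relation
  have hstep_bounds : ∀ a b, step a b → 1 ≤ a ∧ a ≤ n ∧ 1 ≤ b ∧ b ≤ n := by
    rintro a b (h | h) <;> rcases h with h | h
    · have := inSub_bounds h.2.2; omega
    · have := inSub_bounds h.2.2; omega
    · have := inSub_bounds h.2.2; omega
    · have := inSub_bounds h.2.2; omega
  have hstep_irrefl : ∀ a, ¬ step a a := by
    rintro a (h | h) <;> rcases h with h | h <;> exact h.2.1 rfl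
  have hstep_ax1 : ∀ a b c, a < b → b < c → step a c → step b c := by
    rintro a b c hab hbc (h | h)
    · rcases h with h | h
      · exact absurd h.1 (by omega)
      · exact Or.inl (Or.inr ⟨hbc, by omega, inSub_convex_left h.2.2 (by omega) (by omega)⟩)
    · rcases h with h | h
      · exact absurd h.1 (by omega)
      · exact Or.inr (Or.inr ⟨hbc, by omega, inSub_convex_left h.2.2 (by omega) (by omega)⟩)
  have hstep_ax2 : ∀ a b c, a < b → b < c → step c a → step b a := by
    rintro a b c hab hbc (h | h)
    · rcases h with h | h
      · exact Or.inl (Or.inl ⟨hab, by omega, inSub_convex_right h.2.2 (by omega) (by omega)⟩)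
      · exact absurd h.1 (by omega)
    · rcases h with h | h
      · exact Or.inr (Or.inl ⟨hab, by omega, inSub_convex_right h.2.2 (by omega) (by omega)⟩)
      · exact absurd h.1 (by omega)
  -- any common tree absorbs all the relations of R into its BST poset
  have hbst : ∀ S : BinTree, TamariLE T1 S → TamariLE S T1' → TamariLE T2 S → TamariLE S T2' →
      ∀ a b, Relation.TransGen step a b → bstRel S a b := by
    intro S hA hB hC hD a b h
    have hone : ∀ x y, step x y → bstRel S x y := by
      rintro x y (h | h)
      · rcases h with h | h
        · exact (dec_mono hA h).2
        · exact (inc_antitone hB h).2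
      · rcases h with h | h
        · exact (dec_mono hC h).2
        · exact (inc_antitone hD h).2
    induction h with
    | single h => exact hone _ _ h
    | tail h1 h2 ih => exact bst_trans ih (hone _ _ h2)
  constructor
  · constructor
    · rintro ⟨S, hsS, hA, hB, hC, hD⟩ a b hab hba
      exact inSub_antisymm (hbst S hA hB hC hD a b hab).2 (hbst S hA hB hC hD b a hba).2
    · intro hanti
      have hIP : IsIntervalPoset n (Relation.TransGen step) :=
        isIntervalPoset_transGen hstep_bounds hstep_irrefl hstep_ax1 hstep_ax2 hanti
      obtain ⟨S, hsS, hS⟩ := tree_of_poset n _ hIP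
      refine ⟨S, hsS, ?_, ?_, ?_, ?_⟩
      · refine dec_le_tamari (by omega) ?_
        intro a b hd
        exact ⟨hd.1, hS a b (Relation.TransGen.single (Or.inl (Or.inl hd)))⟩
      · refine inc_le_tamari (by omega) ?_
        intro a b hi
        exact ⟨hi.1, hS a b (Relation.TransGen.single (Or.inl (Or.inr hi)))⟩
      · refine dec_le_tamari (by omega) ?_
        intro a b hd
        exact ⟨hd.1, hS a b (Relation.TransGen.single (Or.inr (Or.inl hd)))⟩
      · refine inc_le_tamari (by omega) ?_
        intro a b hi
        exact ⟨hi.1, hS a b (Relation.TransGen.single (Or.inr (Or.inr hi)))⟩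
  · intro hanti
    have hIP : IsIntervalPoset n (Relation.TransGen step) :=
      isIntervalPoset_transGen hstep_bounds hstep_irrefl hstep_ax1 hstep_ax2 hanti
    refine ⟨hIP, ?_⟩
    obtain ⟨U, hU1, hU2⟩ := exists_dec_tree n _ hIP
    obtain ⟨U', hU'1, hU'2⟩ := exists_inc_tree n _ hIP
    obtain ⟨S, hsS, hS⟩ := tree_of_poset n _ hIP
    have hRiff : ∀ a b, Relation.TransGen step a b ↔ IPrel U U' a b := by
      intro a b
      constructor
      · intro h
        have hne : a ≠ b := by
          intro he; exact hIP.2.1 a (he ▸ h)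
        rcases lt_or_gt_of_ne hne with hlt | hgt
        · exact Or.inr ((hU'2 a b).mpr ⟨hlt, h⟩)
        · exact Or.inl ((hU2 a b).mpr ⟨hgt, h⟩)
      · rintro (h | h)
        · exact ((hU2 a b).mp h).2
        · exact ((hU'2 a b).mp h).2
    have hUS : TamariLE U S := by
      refine dec_le_tamari (by omega) ?_
      intro a b hd
      exact ⟨hd.1, hS a b ((hU2 a b).mp hd).2⟩
    have hSU' : TamariLE S U' := by
      refine inc_le_tamari (by omega) ?_
      intro a b hi
      exact ⟨hi.1, hS a b ((hU'2 a b).mp hi).2⟩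
    refine ⟨U, U', hU1, hU'1, Relation.ReflTransGen.trans hUS hSU', hRiff, ?_⟩
    intro S'
    constructor
    · rintro ⟨hUS', hS'U'⟩
      have hs' : S'.size = n := by rw [size_tamari hUS', hU1]
      refine ⟨?_, ?_, ?_, ?_⟩
      · refine dec_le_tamari (by omega) ?_
        intro a b hd
        have hr := (hRiff a b).mp (Relation.TransGen.single (Or.inl (Or.inl hd)))
        rcases hr with h | h
        · exact dec_mono hUS' h
        · exact absurd h.1 (by have := hd.1; omega)
      · refine inc_le_tamari (by omega) ?_
        intro a b hi
        have hr := (hRiff a b).mp (Relation.TransGen.single (Or.inl (Or.inr hi)))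
        rcases hr with h | h
        · exact absurd h.1 (by have := hi.1; omega)
        · exact inc_antitone hS'U' h
      · refine dec_le_tamari (by omega) ?_
        intro a b hd
        have hr := (hRiff a b).mp (Relation.TransGen.single (Or.inr (Or.inl hd)))
        rcases hr with h | h
        · exact dec_mono hUS' h
        · exact absurd h.1 (by have := hd.1; omega)
      · refine inc_le_tamari (by omega) ?_
        intro a b hi
        have hr := (hRiff a b).mp (Relation.TransGen.single (Or.inr (Or.inr hi)))
        rcases hr with h | h
        · exact absurd h.1 (by have := hi.1; omega)
        · exact inc_antitone hS'U' h
    · rintro ⟨hA, hB, hC, hD⟩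
      have hs' : S'.size = n := by rw [size_tamari hA, h1]
      constructor
      · refine dec_le_tamari (by omega) ?_
        intro a b hd
        exact ⟨hd.1, hbst S' hA hB hC hD a b ((hRiff a b).mpr (Or.inl hd))⟩
      · refine inc_le_tamari (by omega) ?_
        intro a b hi
        exact ⟨hi.1, hbst S' hA hB hC hD a b ((hRiff a b).mpr (Or.inr hi))⟩
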